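/- For a dictionary Φ ∈ ℝ^{n×d} with unit-norm columns and any k ≥ 1, the mutual coherence M, global 2-coherence ν_k, and restricted isometry constant δ_{k+1} satisfy M ≤ ν_k ≤ δ_{k+1} ≤ √k · ν_k ≤ k·M. -/

import Mathlib

lemma quad_expand {n d : ℕ} (Φ : Matrix (Fin n) (Fin d) ℝ) (v : Fin d → ℝ) :
    ∑ r, (∑ i, Φ r i * v i)^2 = ∑ i, ∑ j, (v i * v j) * (∑ r, Φ r i * Φ r j) := by
  simp_rw [sq, Finset.sum_mul_sum, Finset.mul_sum]
  rw [Finset.sum_comm]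
  congr 1; ext i
  rw [Finset.sum_comm]
  congr 1; ext j
  congr 1; ext r
  ring

lemma part2_calc {n d : ℕ} (Φ : Matrix (Fin n) (Fin d) ℝ)
    (hcol : ∀ i : Fin d, ∑ r, Φ r i ^ 2 = 1)
    (i : Fin d) (Λ : Finset (Fin d)) (hiΛ : i ∉ Λ) (s : ℝ) (hs : s ≠ 0)
    (hs2 : s ^ 2 = ∑ j ∈ Λ, (∑ r, Φ r i * Φ r j) ^ 2) (ε : ℝ) (hε : ε ^ 2 = 1) :
    (∑ j, (if j = i then 1 else if j ∈ Λ then ε * ((∑ r, Φ r i * Φ r j) / s) else 0 : ℝ) ^ 2 = 2) ∧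
    ∑ r, (∑ j, Φ r j * (if j = i then (1:ℝ) else if j ∈ Λ then ε * ((∑ r', Φ r' i * Φ r' j) / s) else 0)) ^ 2
      = 1 + 2 * ε * s + ∑ r, (∑ j ∈ Λ, Φ r j * ((∑ r', Φ r' i * Φ r' j) / s)) ^ 2 := by
  set c : Fin d → ℝ := fun j => ∑ r, Φ r i * Φ r j with hc
  have hsum0 : ∀ (f : Fin d → ℝ), (∀ x, x ≠ i → x ∉ Λ → f x = 0) →
      ∑ j, f j = ∑ j ∈ insert i Λ, f j := by
    intro f hf
    refine (Finset.sum_subset (Finset.subset_univ _) ?_).symm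
    intro x _ hx
    exact hf x (fun h => hx (by simp [h])) (fun h => hx (Finset.mem_insert_of_mem h))
  constructor
  · rw [hsum0 _ (by intro x hxi hxΛ; simp [hxi, hxΛ]), Finset.sum_insert hiΛ]
    have : ∀ j ∈ Λ, ((if j = i then 1 else if j ∈ Λ then ε * (c j / s) else 0 : ℝ)) ^ 2
        = ε ^ 2 * (c j ^ 2 / s ^ 2) := by
      intro j hj
      have hji : j ≠ i := fun h => hiΛ (h ▸ hj)
      simp only [hji, if_false, hj, if_true]
      field_simp
    rw [Finset.sum_congr rfl this]
    simp only [if_pos rfl, hε, one_mul, one_pow]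
    rw [← Finset.sum_div, ← hs2]
    field_simp
    norm_num
  · have hv : ∀ r, ∑ j, Φ r j * (if j = i then (1:ℝ) else if j ∈ Λ then ε * (c j / s) else 0)
        = Φ r i + ε * ∑ j ∈ Λ, Φ r j * (c j / s) := by
      intro r
      rw [hsum0 _ (by intro x hxi hxΛ; simp [hxi, hxΛ]), Finset.sum_insert hiΛ]
      simp only [if_pos rfl, if_true, mul_one]
      congr 1
      rw [Finset.mul_sum]
      refine Finset.sum_congr rfl fun j hj => ?_
      have hji : j ≠ i := fun h => hiΛ (h ▸ hj)
      simp only [hji, if_false, hj, if_true]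
      ring
    change ∑ r, (∑ j, Φ r j * if j = i then 1 else if j ∈ Λ then ε * (c j / s) else 0) ^ 2 =
        1 + 2 * ε * s + ∑ r, (∑ j ∈ Λ, Φ r j * (c j / s)) ^ 2
    simp only [hv]
    have hAB : ∑ r, Φ r i * ∑ j ∈ Λ, Φ r j * (c j / s) = s := by
      simp_rw [Finset.mul_sum]
      rw [Finset.sum_comm]
      have : ∀ j ∈ Λ, ∑ r, Φ r i * (Φ r j * (c j / s)) = c j ^ 2 / s := by
        intro j hj
        have h1 : ∑ r, Φ r i * (Φ r j * (c j / s)) = (∑ r, Φ r i * Φ r j) * (c j / s) := by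
          rw [Finset.sum_mul]
          exact Finset.sum_congr rfl fun r _ => by ring
        rw [h1, show (∑ r, Φ r i * Φ r j) = c j from rfl]
        ring
      rw [Finset.sum_congr rfl this, ← Finset.sum_div, ← hs2]
      field_simp
    have expand : ∀ r, (Φ r i + ε * ∑ j ∈ Λ, Φ r j * (c j / s)) ^ 2
        = Φ r i ^ 2 + (2 * ε) * (Φ r i * ∑ j ∈ Λ, Φ r j * (c j / s))
          + ε ^ 2 * (∑ j ∈ Λ, Φ r j * (c j / s)) ^ 2 := by intro r; ring
    rw [Finset.sum_congr rfl (fun r _ => expand r), Finset.sum_add_distrib,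
      Finset.sum_add_distrib, ← Finset.mul_sum, ← Finset.mul_sum, hcol i, hAB, hε, one_mul]



/-- For a dictionary Φ ∈ ℝ^{n×d} with unit-norm columns and k ≥ 1,
the mutual coherence M, global 2-coherence ν_k and RIC δ_{k+1} satisfy
M ≤ ν_k ≤ δ_{k+1} ≤ √k·ν_k ≤ k·M. -/
theorem mutual_coherence_le_nu_le_ric_le_sqrtk_nu_le_kM
    (n d k : ℕ) (hk : 1 ≤ k)
    (Φ : Matrix (Fin n) (Fin d) ℝ)
    (hcol : ∀ i : Fin d, ∑ r, Φ r i ^ 2 = 1)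
    (M ν δ : ℝ)
    (hM : IsGreatest {x | ∃ i j : Fin d, i ≠ j ∧ x = |∑ r, Φ r i * Φ r j|} M)
    (hν : IsGreatest {x | ∃ (i : Fin d) (Λ : Finset (Fin d)), i ∉ Λ ∧ Λ.card ≤ k ∧
        x = Real.sqrt (∑ j ∈ Λ, (∑ r, Φ r i * Φ r j) ^ 2)} ν)
    (hδ : IsLeast {x | ∀ v : Fin d → ℝ, ({i | v i ≠ 0} : Set (Fin d)).ncard ≤ k + 1 →
        (1 - x) * ∑ i, v i ^ 2 ≤ ∑ r, (∑ i, Φ r i * v i) ^ 2 ∧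
        ∑ r, (∑ i, Φ r i * v i) ^ 2 ≤ (1 + x) * ∑ i, v i ^ 2} δ) :
    M ≤ ν ∧ ν ≤ δ ∧ δ ≤ Real.sqrt k * ν ∧ Real.sqrt k * ν ≤ k * M := by

  obtain ⟨⟨a, b, hab, hMeq⟩, hMub⟩ := hM
  obtain ⟨⟨i0, Λ0, hiΛ0, hcard0, hνeq⟩, hνub⟩ := hν
  obtain ⟨hδmem, hδlb⟩ := hδ
  have hν0 : 0 ≤ ν := hνeq ▸ Real.sqrt_nonneg _
  have hM0 : 0 ≤ M := hMeq ▸ abs_nonneg _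
  have hk0 : (0:ℝ) ≤ (k:ℝ) := Nat.cast_nonneg k
  -- Part 1 : M ≤ ν
  have p1 : M ≤ ν := by
    refine hνub ⟨a, {b}, ?_, ?_, ?_⟩
    · simp [hab]
    · simpa using hk
    · rw [Finset.sum_singleton, Real.sqrt_sq_eq_abs, hMeq]
  -- δ is nonnegative
  have hδ0 : 0 ≤ δ := by
    have hsupp : ({i | (if i = a then (1:ℝ) else 0) ≠ 0} : Set (Fin d)).ncard ≤ k + 1 := by
      have : ({i | (if i = a then (1:ℝ) else 0) ≠ 0} : Set (Fin d)) = {a} := by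
        ext x; by_cases hx : x = a <;> simp [hx]
      rw [this, Set.ncard_singleton]; omega
    have h := hδmem (fun i => if i = a then (1:ℝ) else 0) hsupp
    have e1 : ∑ i, (if i = a then (1:ℝ) else 0) ^ 2 = 1 := by
      simp [ite_pow, Finset.sum_ite_eq']
    have e2 : ∑ r, (∑ i, Φ r i * (if i = a then (1:ℝ) else 0)) ^ 2 = 1 := by
      have : ∀ r, (∑ i, Φ r i * (if i = a then (1:ℝ) else 0)) = Φ r a := by
        intro r; simp [mul_ite, Finset.sum_ite_eq']
      simp only [this]
      exact hcol a
    rw [e1, e2] at h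
    linarith [h.1, h.2]
  -- Part 2 : ν ≤ δ
  have p2 : ν ≤ δ := by
    rcases eq_or_lt_of_le hν0 with h0 | hpos
    · linarith
    · have hs2 : ν ^ 2 = ∑ j ∈ Λ0, (∑ r, Φ r i0 * Φ r j) ^ 2 := by
        rw [hνeq]; exact Real.sq_sqrt (Finset.sum_nonneg fun j _ => sq_nonneg _)
      have hsupp : ∀ ε : ℝ, ({j | (if j = i0 then (1:ℝ)
          else if j ∈ Λ0 then ε * ((∑ r, Φ r i0 * Φ r j) / ν) else 0) ≠ 0} :
          Set (Fin d)).ncard ≤ k + 1 := by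
        intro ε
        have hsub : ({j | (if j = i0 then (1:ℝ)
            else if j ∈ Λ0 then ε * ((∑ r, Φ r i0 * Φ r j) / ν) else 0) ≠ 0} : Set (Fin d))
            ⊆ ↑(insert i0 Λ0) := by
          intro x hx
          by_contra hxn
          simp only [Finset.coe_insert, Set.mem_insert_iff, Finset.mem_coe, not_or] at hxn
          exact hx (by simp [Set.mem_setOf_eq, hxn.1, hxn.2])
        calc ({j | (if j = i0 then (1:ℝ)
              else if j ∈ Λ0 then ε * ((∑ r, Φ r i0 * Φ r j) / ν) else 0) ≠ 0} :
              Set (Fin d)).ncard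
            ≤ (↑(insert i0 Λ0) : Set (Fin d)).ncard :=
              Set.ncard_le_ncard hsub (Finset.finite_toSet _)
          _ = (insert i0 Λ0).card := Set.ncard_coe_finset _
          _ ≤ Λ0.card + 1 := Finset.card_insert_le _ _
          _ ≤ k + 1 := by omega
      obtain ⟨h2a, h2b⟩ := part2_calc Φ hcol i0 Λ0 hiΛ0 ν (ne_of_gt hpos) hs2 1 (by norm_num)
      obtain ⟨h3a, h3b⟩ := part2_calc Φ hcol i0 Λ0 hiΛ0 ν (ne_of_gt hpos) hs2 (-1) (by norm_num)
      have H1 := hδmem (fun j => if j = i0 then (1:ℝ)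
        else if j ∈ Λ0 then 1 * ((∑ r, Φ r i0 * Φ r j) / ν) else 0) (hsupp 1)
      have H2 := hδmem (fun j => if j = i0 then (1:ℝ)
        else if j ∈ Λ0 then (-1) * ((∑ r, Φ r i0 * Φ r j) / ν) else 0) (hsupp (-1))
      rw [h2a, h2b] at H1
      rw [h3a, h3b] at H2
      linarith [H1.2, H2.1]
  -- Part 3 : δ ≤ √k * ν
  have p3 : δ ≤ Real.sqrt k * ν := by
    refine hδlb ?_
    intro v hv
    set S : Finset (Fin d) := Finset.univ.filter (fun i => v i ≠ 0) with hS
    have hmemS : ∀ x, x ∈ S ↔ v x ≠ 0 := by intro x; simp [hS]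
    have hSset : ({i | v i ≠ 0} : Set (Fin d)) = ↑S := by ext x; simp [hmemS]
    have hScard : S.card ≤ k + 1 := by
      rwa [hSset, Set.ncard_coe_finset] at hv
    set T : ℝ := ∑ i ∈ S, v i ^ 2 with hT
    have hT0 : (0:ℝ) ≤ T := Finset.sum_nonneg fun i _ => sq_nonneg _
    have hTv : ∑ i, v i ^ 2 = T := by
      refine (Finset.sum_subset S.subset_univ fun x _ hx => ?_).symm
      have : v x = 0 := by by_contra h; exact hx ((hmemS x).2 h)
      simp [this]
    have hviT : ∀ i ∈ S, v i ^ 2 ≤ T :=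
      fun i hi => Finset.single_le_sum (f := fun j => v j ^ 2) (fun j _ => sq_nonneg _) hi
    have hexp : ∑ r, (∑ i, Φ r i * v i) ^ 2
        = ∑ i ∈ S, ∑ j ∈ S, v i * v j * (∑ r, Φ r i * Φ r j) := by
      rw [quad_expand]
      rw [← Finset.sum_subset S.subset_univ (fun x _ hx => ?_)]
      · refine Finset.sum_congr rfl fun i _ => ?_
        refine (Finset.sum_subset S.subset_univ fun x _ hx => ?_).symm
        have : v x = 0 := by by_contra h; exact hx ((hmemS x).2 h)
        simp [this]
      · have : v x = 0 := by by_contra h; exact hx ((hmemS x).2 h)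
        simp [this]
    have hdiag : ∀ i ∈ S, ∑ j ∈ S, v i * v j * (∑ r, Φ r i * Φ r j)
        = v i ^ 2 + v i * ∑ j ∈ S.erase i, v j * (∑ r, Φ r i * Φ r j) := by
      intro i hi
      rw [← Finset.add_sum_erase _ _ hi]
      have hGii : (∑ r, Φ r i * Φ r i) = 1 := by
        rw [← hcol i]; exact Finset.sum_congr rfl fun r _ => (sq (Φ r i)).symm
      rw [hGii, Finset.mul_sum]
      have : ∀ j ∈ S.erase i, v i * (v j * (∑ r, Φ r i * Φ r j))
          = v i * v j * (∑ r, Φ r i * Φ r j) := fun j _ => by ring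
      rw [Finset.sum_congr rfl this]
      ring
    have hexp2 : ∑ r, (∑ i, Φ r i * v i) ^ 2
        = T + ∑ i ∈ S, v i * ∑ j ∈ S.erase i, v j * (∑ r, Φ r i * Φ r j) := by
      rw [hexp, Finset.sum_congr rfl hdiag, Finset.sum_add_distrib]
    set E : ℝ := ∑ i ∈ S, v i * ∑ j ∈ S.erase i, v j * (∑ r, Φ r i * Φ r j) with hE
    -- bound each inner sum
    have hR : ∀ i ∈ S, |∑ j ∈ S.erase i, v j * (∑ r, Φ r i * Φ r j)|
        ≤ Real.sqrt (T - v i ^ 2) * ν := by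
      intro i hi
      have herase_card : (S.erase i).card ≤ k := by
        rw [Finset.card_erase_of_mem hi]; omega
      have hnume : Real.sqrt (∑ j ∈ S.erase i, (∑ r, Φ r i * Φ r j) ^ 2) ≤ ν :=
        hνub ⟨i, S.erase i, Finset.notMem_erase i S, herase_card, rfl⟩
      have herased : ∑ j ∈ S.erase i, v j ^ 2 = T - v i ^ 2 := by
        rw [hT, eq_sub_iff_add_eq, Finset.sum_erase_add _ _ hi]
      have h1 : |∑ j ∈ S.erase i, v j * (∑ r, Φ r i * Φ r j)|
          ≤ Real.sqrt (∑ j ∈ S.erase i, v j ^ 2)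
            * Real.sqrt (∑ j ∈ S.erase i, (∑ r, Φ r i * Φ r j) ^ 2) := by
        rw [abs_le]
        constructor
        · have h := Real.sum_mul_le_sqrt_mul_sqrt (S.erase i) (fun j => -v j)
            (fun j => ∑ r, Φ r i * Φ r j)
          simp only [neg_mul, Finset.sum_neg_distrib, neg_sq] at h
          linarith
        · exact Real.sum_mul_le_sqrt_mul_sqrt _ _ _
      rw [herased] at h1
      exact h1.trans (mul_le_mul_of_nonneg_left hnume (Real.sqrt_nonneg _))
    have hEbound : |E| ≤ ν * ∑ i ∈ S, |v i| * Real.sqrt (T - v i ^ 2) := by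
      calc |E| ≤ ∑ i ∈ S, |v i * ∑ j ∈ S.erase i, v j * (∑ r, Φ r i * Φ r j)| :=
            Finset.abs_sum_le_sum_abs _ _
        _ ≤ ∑ i ∈ S, |v i| * (Real.sqrt (T - v i ^ 2) * ν) := by
            refine Finset.sum_le_sum fun i hi => ?_
            rw [abs_mul]
            exact mul_le_mul_of_nonneg_left (hR i hi) (abs_nonneg _)
        _ = ν * ∑ i ∈ S, |v i| * Real.sqrt (T - v i ^ 2) := by
            rw [Finset.mul_sum]
            exact Finset.sum_congr rfl fun i _ => by ring
    have hCS2 : ∑ i ∈ S, |v i| * Real.sqrt (T - v i ^ 2) ≤ Real.sqrt k * T := by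
      have h := Real.sum_mul_le_sqrt_mul_sqrt S (fun i => |v i|)
        (fun i => Real.sqrt (T - v i ^ 2))
      have e1 : ∑ i ∈ S, |v i| ^ 2 = T := by
        rw [hT]; exact Finset.sum_congr rfl fun i _ => sq_abs _
      have e2 : ∑ i ∈ S, (Real.sqrt (T - v i ^ 2)) ^ 2 = S.card * T - T := by
        have : ∀ i ∈ S, (Real.sqrt (T - v i ^ 2)) ^ 2 = T - v i ^ 2 :=
          fun i hi => Real.sq_sqrt (sub_nonneg.2 (hviT i hi))
        rw [Finset.sum_congr rfl this, Finset.sum_sub_distrib, Finset.sum_const,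
          nsmul_eq_mul, ← hT]
      rw [e1, e2] at h
      have h2 : Real.sqrt ((S.card : ℝ) * T - T) ≤ Real.sqrt ((k : ℝ) * T) := by
        apply Real.sqrt_le_sqrt
        have : ((S.card : ℝ)) ≤ (k : ℝ) + 1 := by exact_mod_cast hScard
        nlinarith
      calc ∑ i ∈ S, |v i| * Real.sqrt (T - v i ^ 2)
          ≤ Real.sqrt T * Real.sqrt ((S.card : ℝ) * T - T) := h
        _ ≤ Real.sqrt T * Real.sqrt ((k : ℝ) * T) :=
            mul_le_mul_of_nonneg_left h2 (Real.sqrt_nonneg _)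
        _ = Real.sqrt k * T := by
            rw [Real.sqrt_mul hk0, ← mul_assoc, mul_comm (Real.sqrt T) (Real.sqrt k),
              mul_assoc, Real.mul_self_sqrt hT0]
    have hEfinal : |E| ≤ Real.sqrt k * ν * T := by
      calc |E| ≤ ν * ∑ i ∈ S, |v i| * Real.sqrt (T - v i ^ 2) := hEbound
        _ ≤ ν * (Real.sqrt k * T) := mul_le_mul_of_nonneg_left hCS2 hν0
        _ = Real.sqrt k * ν * T := by ring
    rw [hTv, hexp2]
    rw [abs_le] at hEfinal
    constructor <;> nlinarith [hEfinal.1, hEfinal.2]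
  -- Part 4 : √k * ν ≤ k * M
  have p4 : Real.sqrt k * ν ≤ k * M := by
    have hcj : ∀ j ∈ Λ0, (∑ r, Φ r i0 * Φ r j) ^ 2 ≤ M ^ 2 := by
      intro j hj
      have hji : i0 ≠ j := fun h => hiΛ0 (h ▸ hj)
      have habs : |∑ r, Φ r i0 * Φ r j| ≤ M := hMub ⟨i0, j, hji, rfl⟩
      calc (∑ r, Φ r i0 * Φ r j) ^ 2 = |∑ r, Φ r i0 * Φ r j| ^ 2 := (sq_abs _).symm
        _ ≤ M ^ 2 := pow_le_pow_left₀ (abs_nonneg _) habs 2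
    have hνM : ν ≤ Real.sqrt k * M := by
      have h1 : ν ≤ Real.sqrt ((k : ℝ) * M ^ 2) := by
        rw [hνeq]
        apply Real.sqrt_le_sqrt
        calc ∑ j ∈ Λ0, (∑ r, Φ r i0 * Φ r j) ^ 2 ≤ Λ0.card • (M ^ 2) :=
              Finset.sum_le_card_nsmul _ _ _ hcj
          _ = (Λ0.card : ℝ) * M ^ 2 := nsmul_eq_mul _ _
          _ ≤ (k : ℝ) * M ^ 2 := by
              have : ((Λ0.card : ℝ)) ≤ (k : ℝ) := by exact_mod_cast hcard0
              nlinarith [sq_nonneg M]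
      rwa [Real.sqrt_mul hk0, Real.sqrt_sq hM0] at h1
    calc Real.sqrt k * ν ≤ Real.sqrt k * (Real.sqrt k * M) :=
          mul_le_mul_of_nonneg_left hνM (Real.sqrt_nonneg _)
      _ = k * M := by rw [← mul_assoc, Real.mul_self_sqrt hk0]
  exact ⟨p1, p2, p3, p4⟩
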